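/- Let $m \equiv 2 \pmod 4$, $m > 2$, be in the image of $\phi$. Then $2 \leq \frac{N_2(m)}{N_3(m)} \leq 3$, where $N_2(m) = \max \phi^{-1}(m)$ and $N_3(m) = \min \phi^{-1}(m)$. -/

import Mathlib

/-- If `x` is odd with `φ x = m`, `m % 4 = 2`, `2 < m`, then `m < x` and `2x ≤ 3m`. -/
lemma odd_totient_bounds (m x : ℕ) (hm : 2 < m) (hmod : m % 4 = 2)
    (hx : Odd x) (hφ : Nat.totient x = m) : m < x ∧ 2 * x ≤ 3 * m := by
  have hx0 : x ≠ 0 := by rintro rfl; simp [Nat.totient_zero] at hφ; omega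
  have hx1 : x ≠ 1 := by rintro rfl; simp [Nat.totient_one] at hφ; omega
  set p := x.minFac with hp
  have hpp : p.Prime := Nat.minFac_prime hx1
  have hpodd : p ≠ 2 := by
    intro h
    have : 2 ∣ x := h ▸ Nat.minFac_dvd x
    exact (Nat.not_even_iff_odd.mpr hx) (even_iff_two_dvd.mpr this)
  have hp3 : 3 ≤ p := by
    have := hpp.two_le
    omega
  set a := x.factorization p with ha
  have ha1 : 1 ≤ a := by
    have : p ∣ x := Nat.minFac_dvd x
    exact (Nat.Prime.factorization_pos_of_dvd hpp hx0 this)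
  set t := x / p ^ a with ht
  have hxeq : p ^ a * t = x := Nat.ordProj_mul_ordCompl_eq_self x p
  have hcop : Nat.Coprime (p ^ a) t := Nat.Coprime.pow_left a (Nat.coprime_ordCompl hpp hx0)
  have ht1 : t = 1 := by
    by_contra h
    have ht0 : t ≠ 0 := by intro h0; rw [h0, mul_zero] at hxeq; exact hx0 hxeq.symm
    have htodd : Odd t := by
      rcases hx with ⟨k, hk⟩
      rcases Nat.even_or_odd t with he | ho
      · exfalso
        have : 2 ∣ x := hxeq ▸ Dvd.dvd.mul_left (even_iff_two_dvd.mp he) _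
        omega
      · exact ho
    have ht3 : 2 < t := by
      rcases htodd with ⟨k, hk⟩
      omega
    have hpa3 : 2 < p ^ a := by
      calc 2 < p := hp3
      _ ≤ p ^ a := Nat.le_self_pow (by omega) p
    have he1 : Even (p ^ a).totient := Nat.totient_even hpa3
    have he2 : Even t.totient := Nat.totient_even ht3
    have : Nat.totient x = (p ^ a).totient * t.totient := by
      rw [← hxeq, Nat.totient_mul hcop]
    rcases he1 with ⟨u, hu⟩
    rcases he2 with ⟨v, hv⟩
    have h4 : 4 ∣ m := ⟨u * v, by rw [← hφ, this, hu, hv]; ring⟩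
    omega
  rw [ht1, mul_one] at hxeq
  have hφpa : Nat.totient (p ^ a) = p ^ (a - 1) * (p - 1) :=
    Nat.totient_prime_pow hpp (by omega)
  have hmeq : m = p ^ (a - 1) * (p - 1) := by rw [← hφ, ← hxeq, hφpa]
  have hxval : x = p ^ (a - 1) * p := by
    rw [← hxeq, ← pow_succ]
    congr 1; omega
  have hpow0 : 0 < p ^ (a - 1) := pow_pos (by omega) _
  constructor
  · rw [hmeq, hxval]
    exact (Nat.mul_lt_mul_left hpow0).mpr (by omega)
  · rw [hmeq, hxval]
    calc 2 * (p ^ (a - 1) * p) = p ^ (a - 1) * (2 * p) := by ring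
    _ ≤ p ^ (a - 1) * (3 * (p - 1)) := Nat.mul_le_mul_left _ (by omega)
    _ = 3 * (p ^ (a - 1) * (p - 1)) := by ring

/-- Every even solution is twice an odd solution. -/
lemma even_totient_structure (m x : ℕ) (hm : 2 < m) (hmod : m % 4 = 2)
    (hx : Even x) (hφ : Nat.totient x = m) :
    ∃ y, Odd y ∧ Nat.totient y = m ∧ x = 2 * y := by
  have hx0 : x ≠ 0 := by rintro rfl; simp [Nat.totient_zero] at hφ; omega
  have h2 : (2 : ℕ).Prime := Nat.prime_two
  set a := x.factorization 2 with ha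
  have ha1 : 1 ≤ a :=
    Nat.Prime.factorization_pos_of_dvd h2 hx0 (even_iff_two_dvd.mp hx)
  set t := x / 2 ^ a with ht
  have hxeq : 2 ^ a * t = x := Nat.ordProj_mul_ordCompl_eq_self x 2
  have hcop : Nat.Coprime (2 ^ a) t := Nat.Coprime.pow_left a (Nat.coprime_ordCompl h2 hx0)
  have ht0 : t ≠ 0 := by intro h0; rw [h0, mul_zero] at hxeq; exact hx0 hxeq.symm
  have htodd : Odd t := by
    have h2t : ¬ 2 ∣ t := Nat.not_dvd_ordCompl h2 hx0
    exact Nat.odd_iff.mpr (by omega)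
  have hφx : m = (2 ^ a).totient * t.totient := by
    rw [← hφ, ← hxeq, Nat.totient_mul hcop]
  have hφ2a : (2 ^ a).totient = 2 ^ (a - 1) :=
    by rw [Nat.totient_prime_pow h2 (by omega)]; omega
  have haeq : a = 1 := by
    by_contra h
    have ha2 : 2 ≤ a := by omega
    rcases Nat.eq_or_lt_of_le ht0.bot_lt with h1 | ht2
    · -- t = 1
      have : t = 1 := h1.symm
      rw [this, Nat.totient_one, mul_one, hφ2a] at hφx
      -- m = 2^(a-1), a ≥ 2, so 4 ∣ m unless a-1 = 1; m % 4 = 2 means m = 2^1 = 2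
      rcases Nat.eq_or_lt_of_le ha2 with h2a | h3a
      · rw [← h2a] at hφx; simp at hφx; omega
      · have : 4 ∣ 2 ^ (a - 1) := by
          have : 2 ^ 2 ∣ 2 ^ (a - 1) := pow_dvd_pow 2 (by omega)
          simpa using this
        omega
    · have ht3 : 2 < t := by rcases htodd with ⟨k, hk⟩; omega
      have he2 : Even t.totient := Nat.totient_even ht3
      rcases he2 with ⟨v, hv⟩
      have h2d : 2 ∣ (2:ℕ) ^ (a - 1) := dvd_pow_self 2 (by omega)
      rcases h2d with ⟨u, hu⟩
      have h4 : 4 ∣ m := ⟨u * v, by rw [hφx, hφ2a, hu, hv]; ring⟩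
      omega
  refine ⟨t, htodd, ?_, ?_⟩
  · rw [hφx, hφ2a, haeq]; simp
  · rw [← hxeq, haeq]; ring

theorem N2_div_N3_bounds (m : ℕ) (hm : 2 < m) (hmod : m % 4 = 2)
    (hV : ∃ x : ℕ, Nat.totient x = m) :
    2 * sInf {x : ℕ | Nat.totient x = m} ≤ sSup {x : ℕ | Nat.totient x = m} ∧
    sSup {x : ℕ | Nat.totient x = m} ≤ 3 * sInf {x : ℕ | Nat.totient x = m} := by
  set S := {x : ℕ | Nat.totient x = m} with hS
  have hne : S.Nonempty := hV
  have hbd : BddAbove S := by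
    refine ⟨3 * m, fun x hx => ?_⟩
    rcases Nat.even_or_odd x with he | ho
    · obtain ⟨y, hyo, hyφ, hxy⟩ := even_totient_structure m x hm hmod he hx
      have := (odd_totient_bounds m y hm hmod hyo hyφ).2
      omega
    · have := (odd_totient_bounds m x hm hmod ho hx).2
      omega
  have hInf_mem : sInf S ∈ S := Nat.sInf_mem hne
  have hSup_mem : sSup S ∈ S := Nat.sSup_mem hne hbd
  -- sInf S is odd
  have hInf_odd : Odd (sInf S) := by
    rcases Nat.even_or_odd (sInf S) with he | ho
    · exfalso
      obtain ⟨y, hyo, hyφ, hxy⟩ := even_totient_structure m (sInf S) hm hmod he hInf_mem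
      have hy_mem : y ∈ S := hyφ
      have := Nat.sInf_le hy_mem
      have hy0 : 0 < y := by
        rcases hyo with ⟨k, hk⟩; omega
      omega
    · exact ho
  have hInf_gt : m < sInf S := (odd_totient_bounds m _ hm hmod hInf_odd hInf_mem).1
  -- 2 * sInf S ∈ S
  have h2Inf : 2 * sInf S ∈ S := by
    have hcop : Nat.Coprime 2 (sInf S) := by
      exact Nat.coprime_two_left.mpr hInf_odd
    show Nat.totient (2 * sInf S) = m
    rw [Nat.totient_mul hcop, Nat.totient_two, one_mul]
    exact hInf_mem
  constructor
  · exact le_csSup hbd h2Inf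
  · rcases Nat.even_or_odd (sSup S) with he | ho
    · obtain ⟨y, hyo, hyφ, hxy⟩ := even_totient_structure m (sSup S) hm hmod he hSup_mem
      have := (odd_totient_bounds m y hm hmod hyo hyφ).2
      omega
    · have := (odd_totient_bounds m _ hm hmod ho hSup_mem).2
      omega
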